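/- arXiv:2507.06334 — 2 statements merged into one kernel-verified Lean document; each statement's English description precedes it below -/
import Mathlib

section
/- The parallel token-dropping process on a directed graph where out-degrees are at most H, vertex levels lie in {0, 1, ..., H}, and tokens strictly decrease in level at each move, halts after at most O(H³) phases. -/
open Finset

universe u1 u2

/-- Out-degree of `v` in the directed edge set `E`. -/
def outdeg {V : Type*} [DecidableEq V] (E : Finset (V × V)) (v : V) : ℕ :=
  (E.filter fun e => e.1 = v).card

/-- A vertex `v` is occupied at phase `τ` if some token resides there. -/
def Occupied {V T : Type*} (pos : ℕ → T → V) (τ : ℕ) (v : V) : Prop :=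
  ∃ s, pos τ s = v

/-- A vertex `v` is active at the start of phase `τ` if it is occupied and has an
outgoing edge to a strictly lower-level empty vertex. -/
def Active {V T : Type*} [DecidableEq V] (level : V → ℕ) (edges : ℕ → Finset (V × V))
    (pos : ℕ → T → V) (τ : ℕ) (v : V) : Prop :=
  Occupied pos τ v ∧ ∃ w, (v, w) ∈ edges τ ∧ level w < level v ∧ ¬ Occupied pos τ w

open scoped Classical

namespace TokenDropping

variable {V : Type*} {T : Type*} [DecidableEq V] [Fintype T]

/-- Some token departs vertex `v` at phase `ρ`. -/
def Dep (pos : ℕ → T → V) (v : V) (ρ : ℕ) : Prop :=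
  ∃ q, pos ρ q = v ∧ pos (ρ + 1) q ≠ v

/-- Some token arrives at vertex `w` at phase `a`. -/
def Arr (pos : ℕ → T → V) (w : V) (a : ℕ) : Prop :=
  ∃ q, pos (a + 1) q = w ∧ pos a q ≠ w

lemma stay (pos : ℕ → T → V) (q : T) (a B : ℕ)
    (h : ∀ ρ, a ≤ ρ → ρ < B → pos (ρ + 1) q = pos ρ q) :
    ∀ c, a ≤ c → c ≤ B → pos c q = pos a q := by
  intro c hac
  induction c, hac using Nat.le_induction with
  | base => intro _; rfl
  | succ c hac ih =>
      intro hcB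
      rw [h c hac (by omega)]
      exact ih (by omega)

lemma lastAt (pos : ℕ → T → V) (q : T) (x : V) (a b : ℕ) (hab : a ≤ b)
    (ha : pos a q = x) (hb : pos b q ≠ x) :
    ∃ σ, a ≤ σ ∧ σ < b ∧ pos σ q = x ∧ pos (σ + 1) q ≠ x := by
  by_contra hcon
  push_neg at hcon
  have key : ∀ c, a ≤ c → c ≤ b → pos c q = x := by
    intro c hac
    induction c, hac using Nat.le_induction with
    | base => intro _; exact ha
    | succ c hac ih =>
        intro hcb
        exact hcon c hac (by omega) (ih (by omega))
  exact hb (key b hab le_rfl)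

lemma emono (edges : ℕ → Finset (V × V)) (hsh : ∀ τ, edges (τ + 1) ⊆ edges τ) :
    ∀ a b, a ≤ b → edges b ⊆ edges a := by
  intro a b hab
  induction b, hab using Nat.le_induction with
  | base => exact Finset.Subset.refl _
  | succ b _ ih => exact (hsh b).trans ih

lemma fanti (f : ℕ → ℕ) (h : ∀ n, f (n + 1) ≤ f n) : ∀ a b, a ≤ b → f b ≤ f a := by
  intro a b hab
  induction b, hab using Nat.le_induction with
  | base => exact le_rfl
  | succ b _ ih => exact le_trans (h b) ih

/-- Departures from a vertex number at most its initial out-degree. -/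
lemma card_dep (edges : ℕ → Finset (V × V)) (pos : ℕ → T → V)
    (D : ℕ) (v : V)
    (hmono : ∀ a b, a ≤ b → edges b ⊆ edges a)
    (hmv : ∀ (τ : ℕ) (s : T), pos (τ + 1) s ≠ pos τ s →
      (pos τ s, pos (τ + 1) s) ∈ edges τ ∧ (pos τ s, pos (τ + 1) s) ∉ edges (τ + 1)) :
    ((range D).filter (Dep pos v)).card ≤ ((edges 0).filter (fun e => e.1 = v)).card := by
  rcases isEmpty_or_nonempty T with hT | hT
  · have hempty : (range D).filter (Dep pos v) = ∅ := by
      rw [filter_eq_empty_iff]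
      rintro ρ _ ⟨q, _, _⟩
      exact hT.elim q
    rw [hempty]; simp
  · classical
    set f : ℕ → V × V := fun ρ =>
      if h : Dep pos v ρ then (v, pos (ρ + 1) h.choose) else (v, v) with hf
    have key : ∀ ρ, (hd : Dep pos v ρ) → f ρ ∈ edges ρ ∧ f ρ ∉ edges (ρ + 1) ∧ (f ρ).1 = v := by
      intro ρ hd
      obtain ⟨h1, h2⟩ := hd.choose_spec
      have hne : pos (ρ + 1) hd.choose ≠ pos ρ hd.choose := by rw [h1]; exact h2
      have hm := hmv ρ hd.choose hne
      rw [h1] at hm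
      refine ⟨?_, ?_, ?_⟩
      · simp only [hf, dif_pos hd]; exact hm.1
      · simp only [hf, dif_pos hd]; exact hm.2
      · simp only [hf, dif_pos hd]
    apply Finset.card_le_card_of_injOn f
    · intro ρ hρ
      simp only [Finset.mem_coe, mem_filter, mem_range] at hρ
      have k := key ρ hρ.2
      exact mem_filter.mpr ⟨hmono 0 ρ (Nat.zero_le _) k.1, k.2.2⟩
    · intro ρ₁ h₁ ρ₂ h₂ heq
      simp only [Finset.mem_coe, mem_filter, mem_range] at h₁ h₂
      by_contra hne
      rcases Nat.lt_or_ge ρ₁ ρ₂ with hlt | hge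
      · have k₁ := key ρ₁ h₁.2
        have k₂ := key ρ₂ h₂.2
        exact k₁.2.1 (by rw [heq]; exact hmono (ρ₁ + 1) ρ₂ hlt k₂.1)
      · have hlt : ρ₂ < ρ₁ := lt_of_le_of_ne hge (Ne.symm hne)
        have k₁ := key ρ₁ h₁.2
        have k₂ := key ρ₂ h₂.2
        exact k₂.2.1 (by rw [← heq]; exact hmono (ρ₂ + 1) ρ₁ hlt k₁.1)

/-- Between two arrivals at `w` there is a departure from `w`. -/
lemma between (pos : ℕ → T → V) (w : V) (a a' : ℕ) (hlt : a < a')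
    (ha : Arr pos w a) (ha' : Arr pos w a')
    (hemp : ∀ (τ : ℕ) (s : T), pos (τ + 1) s ≠ pos τ s → ∀ s'', pos τ s'' ≠ pos (τ + 1) s) :
    ∃ ρ, a < ρ ∧ ρ < a' ∧ Dep pos w ρ := by
  obtain ⟨q, hq1, hq2⟩ := ha
  obtain ⟨q', hq1', hq2'⟩ := ha'
  have hne' : pos (a' + 1) q' ≠ pos a' q' := by
    rw [hq1']; exact fun hcon => hq2' hcon.symm
  have hempty : ∀ s'', pos a' s'' ≠ w := by
    intro s''
    have h := hemp a' q' hne' s''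
    rwa [hq1'] at h
  have haa : a + 1 < a' := by
    rcases Nat.lt_or_ge (a + 1) a' with h | h
    · exact h
    · exfalso
      have hEq : a + 1 = a' := by omega
      exact hempty q (hEq ▸ hq1)
  obtain ⟨σ, h1, h2, h3, h4⟩ := lastAt pos q w (a + 1) a' (by omega) hq1 (hempty q)
  exact ⟨σ, by omega, h2, ⟨q, h3, h4⟩⟩

/-- Arrivals at a vertex number at most departures plus one. -/
lemma card_arr (pos : ℕ → T → V) (D : ℕ) (w : V)
    (hemp : ∀ (τ : ℕ) (s : T), pos (τ + 1) s ≠ pos τ s → ∀ s'', pos τ s'' ≠ pos (τ + 1) s) :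
    ((range D).filter (Arr pos w)).card ≤ ((range D).filter (Dep pos w)).card + 1 := by
  classical
  rcases ((range D).filter (Arr pos w)).eq_empty_or_nonempty with h | h
  · rw [h]; simp
  · have hmin := Finset.min'_mem _ h
    set a₀ := ((range D).filter (Arr pos w)).min' h with ha₀
    set g : ℕ → ℕ := fun a =>
      if hg : ((range a).filter (Dep pos w)).Nonempty
        then ((range a).filter (Dep pos w)).max' hg else 0 with hg
    have harr : ∀ a ∈ (range D).filter (Arr pos w), Arr pos w a := by
      intro a haa
      exact (mem_filter.mp haa).2
    have hkey : ∀ a ∈ ((range D).filter (Arr pos w)).erase a₀,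
        ((range a).filter (Dep pos w)).Nonempty := by
      intro a haa
      have hamem : a ∈ (range D).filter (Arr pos w) := Finset.mem_of_mem_erase haa
      have hane : a ≠ a₀ := Finset.ne_of_mem_erase haa
      have h0a : a₀ < a := lt_of_le_of_ne (Finset.min'_le _ a hamem) (Ne.symm hane)
      obtain ⟨ρ, hρ1, hρ2, hρ3⟩ := between pos w a₀ a h0a (harr _ hmin) (harr _ hamem) hemp
      exact ⟨ρ, mem_filter.mpr ⟨mem_range.mpr hρ2, hρ3⟩⟩
    have hstep : (((range D).filter (Arr pos w)).erase a₀).card ≤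
        ((range D).filter (Dep pos w)).card := by
      apply Finset.card_le_card_of_injOn g
      · intro a haa
        have hgne := hkey a haa
        have hamem : a ∈ (range D).filter (Arr pos w) := Finset.mem_of_mem_erase haa
        have haD : a < D := mem_range.mp (mem_filter.mp hamem).1
        have hmax := Finset.max'_mem _ hgne
        simp only [mem_filter, mem_range] at hmax
        have : g a = ((range a).filter (Dep pos w)).max' hgne := by
          simp only [hg, dif_pos hgne]
        rw [this]
        exact mem_filter.mpr ⟨mem_range.mpr (by omega), hmax.2⟩
      · intro a haa a' haa' heq
        by_contra hne
        have hwlog : ∀ b b', b ∈ ((range D).filter (Arr pos w)).erase a₀ →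
            b' ∈ ((range D).filter (Arr pos w)).erase a₀ → b < b' → g b ≠ g b' := by
          intro b b' hb hb' hbb'
          have hbne := hkey b hb
          have hbne' := hkey b' hb'
          have hgb : g b = ((range b).filter (Dep pos w)).max' hbne := by
            simp only [hg, dif_pos hbne]
          have hgb' : g b' = ((range b').filter (Dep pos w)).max' hbne' := by
            simp only [hg, dif_pos hbne']
          have h1 : g b < b := by
            rw [hgb]
            have := Finset.max'_mem _ hbne
            exact mem_range.mp (mem_filter.mp this).1
          obtain ⟨ρ, hρ1, hρ2, hρ3⟩ := between pos w b b' hbb'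
            (harr _ (Finset.mem_of_mem_erase hb)) (harr _ (Finset.mem_of_mem_erase hb')) hemp
          have h2 : ρ ≤ g b' := by
            rw [hgb']
            exact Finset.le_max' _ ρ (mem_filter.mpr ⟨mem_range.mpr hρ2, hρ3⟩)
          omega
        simp only [Finset.mem_coe] at haa haa'
        rcases Nat.lt_or_ge a a' with hlt | hge
        · exact hwlog a a' haa haa' hlt heq
        · exact hwlog a' a haa' haa (lt_of_le_of_ne hge (Ne.symm hne)) heq.symm
    have hcard : ((range D).filter (Arr pos w)).card =
        (((range D).filter (Arr pos w)).erase a₀).card + 1 := by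
      rw [Finset.card_erase_of_mem hmin]
      have : 0 < ((range D).filter (Arr pos w)).card := Finset.card_pos.mpr h
      omega
    omega

/-- Active phases of a vertex number at most `H + H*(H+1)`. -/
lemma card_act (level : V → ℕ) (edges : ℕ → Finset (V × V)) (pos : ℕ → T → V)
    (prop : ℕ → V → Option V) (D H : ℕ)
    (hmono : ∀ a b, a ≤ b → edges b ⊆ edges a)
    (hmv : ∀ (τ : ℕ) (s : T), pos (τ + 1) s ≠ pos τ s →
      (pos τ s, pos (τ + 1) s) ∈ edges τ ∧ (pos τ s, pos (τ + 1) s) ∉ edges (τ + 1) ∧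
        level (pos (τ + 1) s) < level (pos τ s) ∧ ∀ s'', pos τ s'' ≠ pos (τ + 1) s)
    (hout0 : ∀ u : V, ((edges 0).filter (fun e => e.1 = u)).card ≤ H)
    (hprop : ∀ τ u w, prop τ u = some w →
      (u, w) ∈ edges τ ∧ level w < level u ∧ ¬ Occupied pos τ w ∧ Occupied pos τ u)
    (hactive : ∀ τ u, Active level edges pos τ u → (prop τ u).isSome)
    (haccept : ∀ τ u w, prop τ u = some w →
      (∃ s, pos τ s = u ∧ pos (τ + 1) s = w) ∨ (∃ s, pos (τ + 1) s = w ∧ pos τ s ≠ w))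
    (v : V) :
    ((range D).filter (fun τ' => Active level edges pos τ' v)).card ≤ H + H * (H + 1) := by
  classical
  have hemp : ∀ (τ : ℕ) (s : T), pos (τ + 1) s ≠ pos τ s → ∀ s'', pos τ s'' ≠ pos (τ + 1) s :=
    fun τ s h => (hmv τ s h).2.2.2
  have hmv2 : ∀ (τ : ℕ) (s : T), pos (τ + 1) s ≠ pos τ s →
      (pos τ s, pos (τ + 1) s) ∈ edges τ ∧ (pos τ s, pos (τ + 1) s) ∉ edges (τ + 1) :=
    fun τ s h => ⟨(hmv τ s h).1, (hmv τ s h).2.1⟩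
  set N0 := ((edges 0).filter (fun e => e.1 = v)).image Prod.snd with hN0
  have hsub : (range D).filter (fun τ' => Active level edges pos τ' v) ⊆
      (range D).filter (Dep pos v) ∪ N0.biUnion (fun w => (range D).filter (Arr pos w)) := by
    intro τ' hτ'
    simp only [mem_filter, mem_range] at hτ'
    obtain ⟨hD, hA⟩ := hτ'
    have hsome := hactive τ' v hA
    obtain ⟨w, hw⟩ := Option.isSome_iff_exists.mp hsome
    obtain ⟨hedge, hlvl, hnocc, hocc⟩ := hprop τ' v w hw
    have hwv : w ≠ v := by
      intro hEq
      rw [hEq] at hlvl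
      exact lt_irrefl _ hlvl
    rcases haccept τ' v w hw with ⟨s', hs1, hs2⟩ | ⟨s', hs1, hs2⟩
    · refine mem_union_left _ (mem_filter.mpr ⟨mem_range.mpr hD, ⟨s', hs1, ?_⟩⟩)
      rw [hs2]; exact hwv
    · refine mem_union_right _ (mem_biUnion.mpr ⟨w, ?_,
        mem_filter.mpr ⟨mem_range.mpr hD, ⟨s', hs1, hs2⟩⟩⟩)
      exact mem_image.mpr ⟨(v, w), mem_filter.mpr ⟨hmono 0 τ' (Nat.zero_le _) hedge, rfl⟩, rfl⟩
  have hN0card : N0.card ≤ H := le_trans Finset.card_image_le (hout0 v)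
  calc ((range D).filter (fun τ' => Active level edges pos τ' v)).card
      ≤ ((range D).filter (Dep pos v) ∪
          N0.biUnion (fun w => (range D).filter (Arr pos w))).card := card_le_card hsub
    _ ≤ ((range D).filter (Dep pos v)).card +
          (N0.biUnion (fun w => (range D).filter (Arr pos w))).card := card_union_le _ _
    _ ≤ H + H * (H + 1) := by
        have h1 : ((range D).filter (Dep pos v)).card ≤ H :=
          le_trans (card_dep edges pos D v hmono hmv2) (hout0 v)
        have h2 : (N0.biUnion (fun w => (range D).filter (Arr pos w))).card ≤ H * (H + 1) := by
          calc (N0.biUnion (fun w => (range D).filter (Arr pos w))).card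
              ≤ ∑ w ∈ N0, ((range D).filter (Arr pos w)).card := card_biUnion_le
            _ ≤ N0.card * (H + 1) := by
                have hb : ∀ w ∈ N0, ((range D).filter (Arr pos w)).card ≤ H + 1 := by
                  intro w _
                  have := card_arr pos D w hemp
                  have h3 : ((range D).filter (Dep pos w)).card ≤ H :=
                    le_trans (card_dep edges pos D w hmono hmv2) (hout0 w)
                  omega
                have := Finset.sum_le_card_nsmul N0
                  (fun w => ((range D).filter (Arr pos w)).card) (H + 1) hb
                simpa [smul_eq_mul] using this
            _ ≤ H * (H + 1) := Nat.mul_le_mul_right _ hN0card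
        omega

/-- Phases at which `v` is occupied by a token departing before deadline `d`
are covered by active phases of a descending chain below `v`. -/
lemma Wcard (level : V → ℕ) (edges : ℕ → Finset (V × V)) (pos : ℕ → T → V) (D PB : ℕ)
    (hmono : ∀ a b, a ≤ b → edges b ⊆ edges a)
    (hmv : ∀ (τ : ℕ) (s : T), pos (τ + 1) s ≠ pos τ s →
      (pos τ s, pos (τ + 1) s) ∈ edges τ ∧ (pos τ s, pos (τ + 1) s) ∉ edges (τ + 1) ∧
        level (pos (τ + 1) s) < level (pos τ s) ∧ ∀ s'', pos τ s'' ≠ pos (τ + 1) s)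
    (hact : ∀ v : V, ((range D).filter (fun τ' => Active level edges pos τ' v)).card ≤ PB) :
    ∀ (n : ℕ) (v : V) (d : ℕ), level v ≤ n →
      ((range D).filter (fun τ' => Occupied pos τ' v ∧
          ∃ (r : T) (σ : ℕ), τ' ≤ σ ∧ σ < d ∧ pos σ r = v ∧ pos (σ + 1) r ≠ v)).card
        ≤ (n + 1) * PB := by
  intro n
  induction n with
  | zero =>
      intro v d hv
      have hempty : (range D).filter (fun τ' => Occupied pos τ' v ∧
          ∃ (r : T) (σ : ℕ), τ' ≤ σ ∧ σ < d ∧ pos σ r = v ∧ pos (σ + 1) r ≠ v) = ∅ := by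
        rw [filter_eq_empty_iff]
        rintro τ' _ ⟨hocc, r, σ, h1, h2, h3, h4⟩
        have hne : pos (σ + 1) r ≠ pos σ r := by rw [h3]; exact h4
        have hl := (hmv σ r hne).2.2.1
        rw [h3] at hl
        omega
      rw [hempty]; simp
  | succ n ih =>
      intro v d hv
      by_cases hne : ((range d).filter (Dep pos v)).Nonempty
      · have hρmem := Finset.max'_mem _ hne
        set ρs := ((range d).filter (Dep pos v)).max' hne with hρs
        simp only [mem_filter, mem_range] at hρmem
        obtain ⟨hρd, q, hq1, hq2⟩ := hρmem
        have hneq : pos (ρs + 1) q ≠ pos ρs q := by rw [hq1]; exact hq2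
        obtain ⟨hedge, _, hlvl, hemp⟩ := hmv ρs q hneq
        rw [hq1] at hedge hlvl
        set x := pos (ρs + 1) q with hx
        have hxlvl : level x ≤ n := by omega
        have hsub : (range D).filter (fun τ' => Occupied pos τ' v ∧
              ∃ (r : T) (σ : ℕ), τ' ≤ σ ∧ σ < d ∧ pos σ r = v ∧ pos (σ + 1) r ≠ v) ⊆
            ((range D).filter (fun τ' => Active level edges pos τ' v)) ∪
            ((range D).filter (fun τ' => Occupied pos τ' x ∧
              ∃ (r : T) (σ : ℕ), τ' ≤ σ ∧ σ < ρs ∧ pos σ r = x ∧ pos (σ + 1) r ≠ x)) := by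
          intro τ' hτ'
          simp only [mem_filter, mem_range] at hτ'
          obtain ⟨hτ'D, hocc, r, σ, h1, h2, h3, h4⟩ := hτ'
          by_cases hA : Active level edges pos τ' v
          · exact mem_union_left _ (mem_filter.mpr ⟨mem_range.mpr hτ'D, hA⟩)
          · have hσρ : σ ≤ ρs :=
              Finset.le_max' _ σ (mem_filter.mpr ⟨mem_range.mpr h2, ⟨r, h3, h4⟩⟩)
            have hτρ : τ' ≤ ρs := le_trans h1 hσρ
            have hoccx : Occupied pos τ' x := by
              by_contra hno
              exact hA ⟨hocc, x, hmono τ' ρs hτρ hedge, hlvl, hno⟩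
            obtain ⟨qh, hqh⟩ := hoccx
            obtain ⟨σh, hh1, hh2, hh3, hh4⟩ := lastAt pos qh x τ' ρs hτρ hqh (hemp qh)
            exact mem_union_right _ (mem_filter.mpr
              ⟨mem_range.mpr hτ'D, ⟨qh, hqh⟩, qh, σh, hh1, hh2, hh3, hh4⟩)
        calc ((range D).filter (fun τ' => Occupied pos τ' v ∧
              ∃ (r : T) (σ : ℕ), τ' ≤ σ ∧ σ < d ∧ pos σ r = v ∧ pos (σ + 1) r ≠ v)).card
            ≤ (((range D).filter (fun τ' => Active level edges pos τ' v)) ∪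
                ((range D).filter (fun τ' => Occupied pos τ' x ∧
                  ∃ (r : T) (σ : ℕ), τ' ≤ σ ∧ σ < ρs ∧ pos σ r = x ∧ pos (σ + 1) r ≠ x))).card :=
              card_le_card hsub
          _ ≤ ((range D).filter (fun τ' => Active level edges pos τ' v)).card +
                ((range D).filter (fun τ' => Occupied pos τ' x ∧
                  ∃ (r : T) (σ : ℕ), τ' ≤ σ ∧ σ < ρs ∧ pos σ r = x ∧ pos (σ + 1) r ≠ x)).card :=
              card_union_le _ _
          _ ≤ PB + (n + 1) * PB := add_le_add (hact v) (ih x ρs hxlvl)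
          _ = (n + 1 + 1) * PB := by ring
      · have hempty : (range D).filter (fun τ' => Occupied pos τ' v ∧
            ∃ (r : T) (σ : ℕ), τ' ≤ σ ∧ σ < d ∧ pos σ r = v ∧ pos (σ + 1) r ≠ v) = ∅ := by
          rw [filter_eq_empty_iff]
          rintro τ' _ ⟨hocc, r, σ, h1, h2, h3, h4⟩
          exact hne ⟨σ, mem_filter.mpr ⟨mem_range.mpr h2, ⟨r, h3, h4⟩⟩⟩
        rw [hempty]; simp

/-- Along the trajectory of the final mover, every phase is an active phase of
a trajectory vertex or lands in the occupied-by-departing set of the final target. -/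
lemma traj (level : V → ℕ) (edges : ℕ → Finset (V × V)) (pos : ℕ → T → V)
    (sstar : T) (tstar : ℕ)
    (hmono : ∀ a b, a ≤ b → edges b ⊆ edges a)
    (hmv : ∀ (τ : ℕ) (s : T), pos (τ + 1) s ≠ pos τ s →
      (pos τ s, pos (τ + 1) s) ∈ edges τ ∧ (pos τ s, pos (τ + 1) s) ∉ edges (τ + 1) ∧
        level (pos (τ + 1) s) < level (pos τ s) ∧ ∀ s'', pos τ s'' ≠ pos (τ + 1) s)
    (hstar : pos (tstar + 1) sstar ≠ pos tstar sstar) :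
    ∀ (k σ : ℕ), σ ≤ tstar → pos (σ + 1) sstar ≠ pos σ sstar → tstar - σ ≤ k →
      ∀ τ, τ ≤ σ → Occupied pos τ (pos σ sstar) →
      (∃ u ∈ ((range (tstar + 1)).filter
            (fun ρ => pos (ρ + 1) sstar ≠ pos ρ sstar)).image (fun ρ => pos ρ sstar),
          τ ∈ (range (tstar + 1)).filter (fun τ' => Active level edges pos τ' u)) ∨
        τ ∈ (range (tstar + 1)).filter (fun τ' => Occupied pos τ' (pos (tstar + 1) sstar) ∧
          ∃ (r : T) (σ' : ℕ), τ' ≤ σ' ∧ σ' < tstar ∧ pos σ' r = pos (tstar + 1) sstar ∧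
            pos (σ' + 1) r ≠ pos (tstar + 1) sstar) := by
  have hterm : ∀ τ, τ ≤ tstar → Occupied pos τ (pos tstar sstar) →
      (∃ u ∈ ((range (tstar + 1)).filter
            (fun ρ => pos (ρ + 1) sstar ≠ pos ρ sstar)).image (fun ρ => pos ρ sstar),
          τ ∈ (range (tstar + 1)).filter (fun τ' => Active level edges pos τ' u)) ∨
        τ ∈ (range (tstar + 1)).filter (fun τ' => Occupied pos τ' (pos (tstar + 1) sstar) ∧
          ∃ (r : T) (σ' : ℕ), τ' ≤ σ' ∧ σ' < tstar ∧ pos σ' r = pos (tstar + 1) sstar ∧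
            pos (σ' + 1) r ≠ pos (tstar + 1) sstar) := by
    intro τ hτ hocc
    by_cases hA : Active level edges pos τ (pos tstar sstar)
    · exact Or.inl ⟨pos tstar sstar,
        mem_image.mpr ⟨tstar, mem_filter.mpr ⟨mem_range.mpr (by omega), hstar⟩, rfl⟩,
        mem_filter.mpr ⟨mem_range.mpr (by omega), hA⟩⟩
    · obtain ⟨hedge, _, hlvl, hemp⟩ := hmv tstar sstar hstar
      have hoccx : Occupied pos τ (pos (tstar + 1) sstar) := by
        by_contra hno
        exact hA ⟨hocc, pos (tstar + 1) sstar, hmono τ tstar hτ hedge, hlvl, hno⟩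
      obtain ⟨qh, hqh⟩ := hoccx
      obtain ⟨σh, hh1, hh2, hh3, hh4⟩ :=
        lastAt pos qh (pos (tstar + 1) sstar) τ tstar hτ hqh (hemp qh)
      exact Or.inr (mem_filter.mpr
        ⟨mem_range.mpr (by omega), ⟨qh, hqh⟩, qh, σh, hh1, hh2, hh3, hh4⟩)
  intro k
  induction k with
  | zero =>
      intro σ hσ hmvσ hk τ hτσ hocc
      have hEq : σ = tstar := by omega
      subst hEq
      exact hterm τ hτσ hocc
  | succ k ih =>
      intro σ hσ hmvσ hk τ hτσ hocc
      by_cases hcase : σ = tstar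
      · subst hcase
        exact hterm τ hτσ hocc
      · have hσlt : σ < tstar := lt_of_le_of_ne hσ hcase
        by_cases hA : Active level edges pos τ (pos σ sstar)
        · exact Or.inl ⟨pos σ sstar,
            mem_image.mpr ⟨σ, mem_filter.mpr ⟨mem_range.mpr (by omega), hmvσ⟩, rfl⟩,
            mem_filter.mpr ⟨mem_range.mpr (by omega), hA⟩⟩
        · obtain ⟨hedge, _, hlvl, hemp⟩ := hmv σ sstar hmvσ
          have hoccx : Occupied pos τ (pos (σ + 1) sstar) := by
            by_contra hno
            exact hA ⟨hocc, pos (σ + 1) sstar, hmono τ σ hτσ hedge, hlvl, hno⟩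
          have hSne : ((range (tstar + 1)).filter
              (fun ρ => σ < ρ ∧ pos (ρ + 1) sstar ≠ pos ρ sstar)).Nonempty :=
            ⟨tstar, mem_filter.mpr ⟨mem_range.mpr (by omega), hσlt, hstar⟩⟩
          have hmem := Finset.min'_mem _ hSne
          set σ'' := ((range (tstar + 1)).filter
              (fun ρ => σ < ρ ∧ pos (ρ + 1) sstar ≠ pos ρ sstar)).min' hSne with hσ''
          simp only [mem_filter, mem_range] at hmem
          obtain ⟨hr, hgt, hmv''⟩ := hmem
          have hno : ∀ ρ, σ + 1 ≤ ρ → ρ < σ'' → pos (ρ + 1) sstar = pos ρ sstar := by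
            intro ρ h1 h2
            by_contra hmove
            have hρ : ρ ∈ (range (tstar + 1)).filter
                (fun ρ => σ < ρ ∧ pos (ρ + 1) sstar ≠ pos ρ sstar) :=
              mem_filter.mpr ⟨mem_range.mpr (by omega), by omega, hmove⟩
            have := Finset.min'_le _ ρ hρ
            omega
          have hstay : pos σ'' sstar = pos (σ + 1) sstar :=
            stay pos sstar (σ + 1) σ'' hno σ'' hgt le_rfl
          have hocc'' : Occupied pos τ (pos σ'' sstar) := by
            rw [hstay]; exact hoccx
          exact ih σ'' (by omega) hmv'' (by omega) τ (by omega) hocc''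

end TokenDropping

/-- The parallel token-dropping process, on a directed graph with out-degrees at most `H`,
vertex levels in `{0, …, H}`, and tokens strictly decreasing in level at each move,
halts after `O(H³)` phases: no token moves from phase `C·H³` on.

Process axioms: at most one token per vertex (`hinj`); levels are bounded by `H`
(`hlevel`); out-degrees are bounded by `H` (`hout`); edges are only removed (`hshrink`),
and only when a token moves along them (`hremove`); a moving token goes along a current
edge, which is consumed, to a strictly lower-level vertex empty at the start of the phase,
following its vertex's proposal (`hmoves`); proposals go along current edges, from
occupied vertices to strictly lower-level empty vertices (`hprop`); every active vertex
proposes (`hactive`); each proposal is accepted or its target receives some other token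
that phase (`haccept`); and as long as some vertex is active, some token moves
(`hprogress`). -/
theorem token_dropping_halts :
    ∃ C : ℕ, 0 < C ∧
    ∀ (V : Type u1) (T : Type u2) [DecidableEq V] [Fintype T] (H : ℕ)
      (level : V → ℕ) (edges : ℕ → Finset (V × V)) (pos : ℕ → T → V)
      (prop : ℕ → V → Option V),
      (∀ τ, Function.Injective (pos τ)) →
      (∀ v, level v ≤ H) →
      (∀ τ w, outdeg (edges τ) w ≤ H) →
      (∀ τ, edges (τ + 1) ⊆ edges τ) →
      (∀ (τ : ℕ) (e : V × V), e ∈ edges τ → e ∉ edges (τ + 1) →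
        ∃ s, pos τ s = e.1 ∧ pos (τ + 1) s = e.2) →
      (∀ (τ : ℕ) (s : T), pos (τ + 1) s ≠ pos τ s →
        (pos τ s, pos (τ + 1) s) ∈ edges τ ∧ (pos τ s, pos (τ + 1) s) ∉ edges (τ + 1) ∧
          level (pos (τ + 1) s) < level (pos τ s) ∧
          prop τ (pos τ s) = some (pos (τ + 1) s) ∧
          ∀ s'', pos τ s'' ≠ pos (τ + 1) s) →
      (∀ τ u w, prop τ u = some w →
        (u, w) ∈ edges τ ∧ level w < level u ∧ ¬ Occupied pos τ w ∧ Occupied pos τ u) →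
      (∀ τ u, Active level edges pos τ u → (prop τ u).isSome) →
      (∀ τ u w, prop τ u = some w →
        (∃ s, pos τ s = u ∧ pos (τ + 1) s = w) ∨
          (∃ s, pos (τ + 1) s = w ∧ pos τ s ≠ w)) →
      (∀ τ : ℕ, (∃ u, Active level edges pos τ u) → ∃ s, pos (τ + 1) s ≠ pos τ s) →
      ∀ τ : ℕ, C * H ^ 3 ≤ τ → ∀ s : T, pos (τ + 1) s = pos τ s := by
  classical
  refine ⟨6, by norm_num, ?_⟩
  intro V T _ _ H level edges pos prop hinj hlevel hout hshrink hremove hmoves hprop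
    hactive haccept hprogress τ htau s
  by_contra hs
  -- Basic facts
  have hmono : ∀ a b, a ≤ b → edges b ⊆ edges a := TokenDropping.emono edges hshrink
  have hmv4 : ∀ (τ' : ℕ) (s' : T), pos (τ' + 1) s' ≠ pos τ' s' →
      (pos τ' s', pos (τ' + 1) s') ∈ edges τ' ∧
        (pos τ' s', pos (τ' + 1) s') ∉ edges (τ' + 1) ∧
        level (pos (τ' + 1) s') < level (pos τ' s') ∧
        ∀ s'', pos τ' s'' ≠ pos (τ' + 1) s' := by
    intro τ' s' h
    obtain ⟨h1, h2, h3, _, h5⟩ := hmoves τ' s' h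
    exact ⟨h1, h2, h3, h5⟩
  have hlt0 : level (pos (τ + 1) s) < level (pos τ s) := (hmv4 τ s hs).2.2.1
  have hH : 1 ≤ H := by
    have h1 := hlevel (pos τ s)
    omega
  have hout0 : ∀ u : V, ((edges 0).filter (fun e => e.1 = u)).card ≤ H := by
    intro u
    have := hout 0 u
    simpa [outdeg] using this
  have hactcard : ∀ u : V,
      ((range (τ + 1)).filter (fun τ' => Active level edges pos τ' u)).card
        ≤ H + H * (H + 1) :=
    TokenDropping.card_act level edges pos prop (τ + 1) H hmono hmv4 hout0 hprop
      hactive haccept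
  -- anti-monotonicity of the level of s along time
  have hanti : ∀ a b : ℕ, a ≤ b → level (pos b s) ≤ level (pos a s) := by
    apply TokenDropping.fanti (fun n => level (pos n s))
    intro n
    by_cases h : pos (n + 1) s = pos n s
    · simp only [h]; exact le_rfl
    · exact le_of_lt ((hmv4 n s h).2.2.1)
  -- the covering
  have hcover : range (τ + 1) ⊆
      ((((range (τ + 1)).filter (fun ρ => pos (ρ + 1) s ≠ pos ρ s)).image
          (fun ρ => pos ρ s)).biUnion
        (fun u => (range (τ + 1)).filter (fun τ' => Active level edges pos τ' u))) ∪
      ((range (τ + 1)).filter (fun τ' => Occupied pos τ' (pos (τ + 1) s) ∧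
        ∃ (r : T) (σ' : ℕ), τ' ≤ σ' ∧ σ' < τ ∧ pos σ' r = pos (τ + 1) s ∧
          pos (σ' + 1) r ≠ pos (τ + 1) s)) := by
    intro τ' hτ'
    have hτ'D : τ' < τ + 1 := mem_range.mp hτ'
    have hS0ne : (((range (τ + 1)).filter (fun ρ => pos (ρ + 1) s ≠ pos ρ s)).filter
        (fun ρ => τ' ≤ ρ)).Nonempty :=
      ⟨τ, mem_filter.mpr ⟨mem_filter.mpr ⟨mem_range.mpr (by omega), hs⟩, by omega⟩⟩
    have hmem := Finset.min'_mem _ hS0ne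
    set σ₀ := (((range (τ + 1)).filter (fun ρ => pos (ρ + 1) s ≠ pos ρ s)).filter
        (fun ρ => τ' ≤ ρ)).min' hS0ne with hσ₀
    simp only [mem_filter, mem_range] at hmem
    obtain ⟨⟨hσ₀D, hσ₀mv⟩, hτ'σ₀⟩ := hmem
    have hno : ∀ ρ, τ' ≤ ρ → ρ < σ₀ → pos (ρ + 1) s = pos ρ s := by
      intro ρ h1 h2
      by_contra hmove
      have hρ : ρ ∈ ((range (τ + 1)).filter (fun ρ => pos (ρ + 1) s ≠ pos ρ s)).filter
          (fun ρ => τ' ≤ ρ) :=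
        mem_filter.mpr ⟨mem_filter.mpr ⟨mem_range.mpr (by omega), hmove⟩, h1⟩
      have := Finset.min'_le _ ρ hρ
      omega
    have hstay0 : pos σ₀ s = pos τ' s :=
      TokenDropping.stay pos s τ' σ₀ hno σ₀ hτ'σ₀ le_rfl
    have hocc0 : Occupied pos τ' (pos σ₀ s) := ⟨s, hstay0.symm⟩
    rcases TokenDropping.traj level edges pos s τ hmono hmv4 hs τ σ₀ (by omega) hσ₀mv
        (by omega) τ' hτ'σ₀ hocc0 with ⟨u, hu, hτ'act⟩ | hW
    · exact mem_union_left _ (mem_biUnion.mpr ⟨u, hu, hτ'act⟩)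
    · exact mem_union_right _ hW
  -- counting
  have hMimcard : (((range (τ + 1)).filter (fun ρ => pos (ρ + 1) s ≠ pos ρ s)).image
      (fun ρ => pos ρ s)).card ≤ H - level (pos (τ + 1) s) := by
    have hmaps : ∀ u ∈ ((range (τ + 1)).filter (fun ρ => pos (ρ + 1) s ≠ pos ρ s)).image
        (fun ρ => pos ρ s), level u ∈ Finset.Icc (level (pos (τ + 1) s) + 1) H := by
      intro u hu
      obtain ⟨ρ, hρ, rfl⟩ := mem_image.mp hu
      simp only [mem_filter, mem_range] at hρ
      obtain ⟨hρD, hρmv⟩ := hρ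
      have h1 : level (pos (τ + 1) s) ≤ level (pos (ρ + 1) s) := hanti (ρ + 1) (τ + 1) (by omega)
      have h2 : level (pos (ρ + 1) s) < level (pos ρ s) := (hmv4 ρ s hρmv).2.2.1
      have h3 : level (pos ρ s) ≤ H := hlevel _
      rw [Finset.mem_Icc]
      omega
    have hinjlvl : Set.InjOn level
        ↑(((range (τ + 1)).filter (fun ρ => pos (ρ + 1) s ≠ pos ρ s)).image
          (fun ρ => pos ρ s)) := by
      intro u₁ h₁ u₂ h₂ heq
      simp only [Finset.mem_coe] at h₁ h₂
      obtain ⟨ρ₁, hρ₁, hEq₁⟩ := mem_image.mp h₁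
      obtain ⟨ρ₂, hρ₂, hEq₂⟩ := mem_image.mp h₂
      simp only [mem_filter, mem_range] at hρ₁ hρ₂
      rcases lt_trichotomy ρ₁ ρ₂ with h | h | h
      · exfalso
        have ha : level (pos ρ₂ s) ≤ level (pos (ρ₁ + 1) s) := hanti (ρ₁ + 1) ρ₂ (by omega)
        have hb : level (pos (ρ₁ + 1) s) < level (pos ρ₁ s) := (hmv4 ρ₁ s hρ₁.2).2.2.1
        rw [hEq₁, hEq₂] at *
        omega
      · rw [← hEq₁, ← hEq₂, h]
      · exfalso
        have ha : level (pos ρ₁ s) ≤ level (pos (ρ₂ + 1) s) := hanti (ρ₂ + 1) ρ₁ (by omega)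
        have hb : level (pos (ρ₂ + 1) s) < level (pos ρ₂ s) := (hmv4 ρ₂ s hρ₂.2).2.2.1
        rw [hEq₁, hEq₂] at *
        omega
    have := Finset.card_le_card_of_injOn level hmaps hinjlvl
    rw [Nat.card_Icc] at this
    omega
  have hWFcard : ((range (τ + 1)).filter (fun τ' => Occupied pos τ' (pos (τ + 1) s) ∧
      ∃ (r : T) (σ' : ℕ), τ' ≤ σ' ∧ σ' < τ ∧ pos σ' r = pos (τ + 1) s ∧
        pos (σ' + 1) r ≠ pos (τ + 1) s)).card
      ≤ (level (pos (τ + 1) s) + 1) * (H + H * (H + 1)) :=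
    TokenDropping.Wcard level edges pos (τ + 1) (H + H * (H + 1)) hmono hmv4 hactcard
      (level (pos (τ + 1) s)) (pos (τ + 1) s) τ le_rfl
  have hbi : ((((range (τ + 1)).filter (fun ρ => pos (ρ + 1) s ≠ pos ρ s)).image
      (fun ρ => pos ρ s)).biUnion
        (fun u => (range (τ + 1)).filter (fun τ' => Active level edges pos τ' u))).card
      ≤ (((range (τ + 1)).filter (fun ρ => pos (ρ + 1) s ≠ pos ρ s)).image
          (fun ρ => pos ρ s)).card * (H + H * (H + 1)) := by
    calc ((((range (τ + 1)).filter (fun ρ => pos (ρ + 1) s ≠ pos ρ s)).image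
        (fun ρ => pos ρ s)).biUnion
          (fun u => (range (τ + 1)).filter (fun τ' => Active level edges pos τ' u))).card
        ≤ ∑ u ∈ (((range (τ + 1)).filter (fun ρ => pos (ρ + 1) s ≠ pos ρ s)).image
            (fun ρ => pos ρ s)),
            ((range (τ + 1)).filter (fun τ' => Active level edges pos τ' u)).card :=
          card_biUnion_le
      _ ≤ _ := by
          have := Finset.sum_le_card_nsmul
            (((range (τ + 1)).filter (fun ρ => pos (ρ + 1) s ≠ pos ρ s)).image
              (fun ρ => pos ρ s))
            (fun u => ((range (τ + 1)).filter (fun τ' => Active level edges pos τ' u)).card)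
            (H + H * (H + 1)) (fun u _ => hactcard u)
          simpa [smul_eq_mul] using this
  have hlf : level (pos (τ + 1) s) ≤ H := hlevel _
  have htotal : τ + 1 ≤ (H + 1) * (H + H * (H + 1)) := by
    have h0 : (range (τ + 1)).card = τ + 1 := card_range _
    have h1 := card_le_card hcover
    rw [h0] at h1
    have h2 := card_union_le
      ((((range (τ + 1)).filter (fun ρ => pos (ρ + 1) s ≠ pos ρ s)).image
          (fun ρ => pos ρ s)).biUnion
        (fun u => (range (τ + 1)).filter (fun τ' => Active level edges pos τ' u)))
      ((range (τ + 1)).filter (fun τ' => Occupied pos τ' (pos (τ + 1) s) ∧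
        ∃ (r : T) (σ' : ℕ), τ' ≤ σ' ∧ σ' < τ ∧ pos σ' r = pos (τ + 1) s ∧
          pos (σ' + 1) r ≠ pos (τ + 1) s))
    have h3 : (((range (τ + 1)).filter (fun ρ => pos (ρ + 1) s ≠ pos ρ s)).image
        (fun ρ => pos ρ s)).card * (H + H * (H + 1))
        ≤ (H - level (pos (τ + 1) s)) * (H + H * (H + 1)) :=
      Nat.mul_le_mul_right _ hMimcard
    have h4 : (H - level (pos (τ + 1) s)) * (H + H * (H + 1)) +
        (level (pos (τ + 1) s) + 1) * (H + H * (H + 1)) = (H + 1) * (H + H * (H + 1)) := by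
      rw [← add_mul]
      congr 1
      omega
    omega
  have hfin : (H + 1) * (H + H * (H + 1)) ≤ 6 * H ^ 3 := by
    have k1 : H ^ 2 ≤ H ^ 3 := by
      calc H ^ 2 = H ^ 2 * 1 := by ring
        _ ≤ H ^ 2 * H := Nat.mul_le_mul_left _ hH
        _ = H ^ 3 := by ring
    have k2 : H ≤ H ^ 3 := by
      calc H = H * 1 := by ring
        _ ≤ H * H ^ 2 := Nat.mul_le_mul_left _ (by nlinarith)
        _ = H ^ 3 := by ring
    have expand : (H + 1) * (H + H * (H + 1)) = H ^ 3 + 3 * H ^ 2 + 2 * H := by ring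
    omega
  omega
end

section
/- Expansion bound: let G = (V, E) be a directed graph on n vertices in which every vertex w reachable from a fixed vertex v within d = ⌈4 log n / ε⌉ directed steps satisfies δ⁺(w) > (1 + ε/2)·ρ(G), where ρ(G) is the density of the underlying undirected graph and ε ∈ (0, 0.1). Then defining S_0 = {v} and S_{i+1} = S_i ∪ {u : (w → u) ∈ E, w ∈ S_i}, we have |S_{i+1}| ≥ (1 + ε/2)·|S_i| for all 0 ≤ i < d; consequently no such vertex v exists (as |S_d| > n gives a contradiction). -/
open Finset
open scoped NNRat

/-- Density of the underlying undirected graph: the maximum over nonempty `S ⊆ V`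
of `|E[S]| / |S|`. -/
def ddensity {V : Type*} [Fintype V] [DecidableEq V] (E : Finset (V × V)) : ℚ≥0 :=
  ((univ : Finset V).powerset.filter fun S => S.Nonempty).sup
    fun S => ((E.filter fun e => e.1 ∈ S ∧ e.2 ∈ S).card : ℚ≥0) / (S.card : ℚ≥0)

/-- One expansion step: `S ↦ S ∪ {u : (w → u) ∈ E, w ∈ S}`. -/
def expandStep {V : Type*} [DecidableEq V] (E : Finset (V × V)) (A : Finset V) : Finset V :=
  A ∪ (E.filter fun e => e.1 ∈ A).image Prod.snd

lemma sum_outdeg' {V : Type*} [DecidableEq V] (E : Finset (V × V)) (A : Finset V) :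
    ∑ w ∈ A, outdeg E w = (E.filter fun e => e.1 ∈ A).card := by
  rw [Finset.card_eq_sum_card_fiberwise (f := Prod.fst) (s := E.filter fun e => e.1 ∈ A) (t := A)
    (fun e he => (Finset.mem_filter.1 he).2)]
  refine Finset.sum_congr rfl fun w hw => ?_
  unfold outdeg
  congr 1
  ext e
  simp only [Finset.mem_filter]
  constructor
  · rintro ⟨he, h2⟩; exact ⟨⟨he, h2 ▸ hw⟩, h2⟩
  · rintro ⟨⟨he, _⟩, h2⟩; exact ⟨he, h2⟩

lemma density_bound' {V : Type*} [Fintype V] [DecidableEq V] (E : Finset (V × V))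
    (S : Finset V) (hS : S.Nonempty) :
    ((E.filter fun e => e.1 ∈ S ∧ e.2 ∈ S).card : ℚ≥0) ≤ ddensity E * S.card := by
  have h := Finset.le_sup (f := fun S : Finset V =>
      ((E.filter fun e => e.1 ∈ S ∧ e.2 ∈ S).card : ℚ≥0) / (S.card : ℚ≥0))
    (Finset.mem_filter.2 ⟨Finset.mem_powerset.2 (Finset.subset_univ S), hS⟩)
  rw [div_le_iff₀ (by exact_mod_cast hS.card_pos)] at h
  unfold ddensity
  exact h
section
variable {V : Type*} [Fintype V] [DecidableEq V]

lemma key_step (E : Finset (V × V)) (ε : ℝ) (hε : 0 < ε) (A : Finset V) (hA : A.Nonempty)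
    (hout : ∀ w ∈ A, (1 + ε / 2) * ((ddensity E : ℚ≥0) : ℝ) < (outdeg E w : ℝ)) :
    (1 + ε / 2) * (A.card : ℝ) < (((expandStep E A) : Finset V).card : ℝ) := by
  set ρ : ℝ := ((ddensity E : ℚ≥0) : ℝ) with hρdef
  have hρ0 : 0 ≤ ρ := by positivity
  have hB : A ⊆ expandStep E A := Finset.subset_union_left
  have hBne : (expandStep E A).Nonempty := hA.mono hB
  have c1 : (A.card : ℝ) * ((1 + ε / 2) * ρ) < ∑ w ∈ A, (outdeg E w : ℝ) := by
    have := Finset.sum_lt_sum_of_nonempty hA hout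
    simpa [Finset.sum_const, nsmul_eq_mul, mul_comm] using this
  have c2 : (E.filter fun e => e.1 ∈ A) ⊆
      E.filter fun e => e.1 ∈ expandStep E A ∧ e.2 ∈ expandStep E A := by
    intro e he
    rw [Finset.mem_filter] at he ⊢
    exact ⟨he.1, hB he.2,
      Finset.mem_union_right _ (Finset.mem_image.2 ⟨e, Finset.mem_filter.2 ⟨he.1, he.2⟩, rfl⟩)⟩
  have c3 : (((E.filter fun e => e.1 ∈ expandStep E A ∧ e.2 ∈ expandStep E A).card : ℝ))
      ≤ ρ * ((expandStep E A).card : ℝ) := by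
    have h := density_bound' E (expandStep E A) hBne
    have := (NNRat.cast_le (K := ℝ)).2 h
    push_cast at this
    exact this
  have c4 : ∑ w ∈ A, (outdeg E w : ℝ) ≤ ρ * ((expandStep E A).card : ℝ) := by
    calc ∑ w ∈ A, (outdeg E w : ℝ) = ((E.filter fun e => e.1 ∈ A).card : ℝ) := by
          exact_mod_cast congrArg (Nat.cast : ℕ → ℝ) (sum_outdeg' E A)
      _ ≤ (((E.filter fun e => e.1 ∈ expandStep E A ∧ e.2 ∈ expandStep E A).card : ℝ)) := by
          exact_mod_cast Finset.card_le_card c2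
      _ ≤ _ := c3
  have hmain : (A.card : ℝ) * ((1 + ε / 2) * ρ) < ρ * ((expandStep E A).card : ℝ) :=
    c1.trans_le c4
  have hρpos : 0 < ρ := by
    rcases hρ0.eq_or_lt with h | h
    · exfalso; rw [← h] at hmain; simp at hmain
    · exact h
  nlinarith [hmain, hρpos]
end

/-- Expansion bound: if every vertex reachable from `v` within `d = ⌈4 log n / ε⌉`
directed steps has out-degree exceeding `(1 + ε/2)·ρ(G)`, then each expansion step
starting from `{v}` grows the set by a factor `(1 + ε/2)`; consequently no such vertex
`v` exists (the hypotheses are contradictory). -/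
theorem expansion_bound {V : Type*} [Fintype V] [DecidableEq V]
    (E : Finset (V × V)) (v : V) (ε : ℝ) (hε0 : 0 < ε) (hε1 : ε < 0.1)
    (hd : ∀ w ∈ (expandStep E)^[⌈4 * Real.log (Fintype.card V) / ε⌉₊] {v},
      (1 + ε / 2) * (ddensity E : ℝ) < (outdeg E w : ℝ)) :
    (∀ i < ⌈4 * Real.log (Fintype.card V) / ε⌉₊,
      (1 + ε / 2) * (((expandStep E)^[i] {v}).card : ℝ) ≤
        (((expandStep E)^[i + 1] {v}).card : ℝ)) ∧ False := by
  set n : ℕ := Fintype.card V with hn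
  set d : ℕ := ⌈4 * Real.log n / ε⌉₊ with hdd
  set S : ℕ → Finset V := fun i => (expandStep E)^[i] {v} with hS
  have hstepS : ∀ i, S (i + 1) = expandStep E (S i) := by
    intro i; simp [hS, Function.iterate_succ_apply']
  have hmono : Monotone S := monotone_nat_of_le_succ fun i => by
    rw [hstepS i]; exact Finset.le_iff_subset.2 Finset.subset_union_left
  have hne : ∀ i, (S i).Nonempty := fun i => by
    have : v ∈ S 0 := by simp [hS]
    exact ⟨v, hmono (Nat.zero_le i) this⟩
  have step : ∀ i ≤ d, (1 + ε / 2) * ((S i).card : ℝ) < ((S (i + 1)).card : ℝ) := by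
    intro i hi
    rw [hstepS i]
    exact key_step E ε hε0 (S i) (hne i) fun w hw => hd w (hmono hi hw)
  refine ⟨fun i hi => (step i hi.le).le, ?_⟩
  have hε2 : (0:ℝ) < 1 + ε / 2 := by linarith
  have growth : ∀ i ≤ d, (1 + ε / 2) ^ i ≤ ((S i).card : ℝ) := by
    intro i
    induction i with
    | zero => intro _; simp [hS]
    | succ k ih =>
      intro hk
      have h1 := ih (le_of_lt (Nat.lt_of_succ_le hk))
      have h2 := step k (le_of_lt (Nat.lt_of_succ_le hk))
      calc (1 + ε / 2) ^ (k + 1) = (1 + ε / 2) * (1 + ε / 2) ^ k := by ring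
        _ ≤ (1 + ε / 2) * ((S k).card : ℝ) := by nlinarith
        _ ≤ _ := h2.le
  -- n ≥ 1
  have hn1 : 1 ≤ n := Fintype.card_pos_iff.2 ⟨v⟩
  have hnR : (1:ℝ) ≤ (n:ℝ) := by exact_mod_cast hn1
  -- (1+ε/2)^d ≥ n
  have hlog : Real.log (1 + ε / 2) ≥ ε / 4 := by
    have hpos : (0:ℝ) < 1 + ε / 2 := hε2
    have h1 := Real.log_le_sub_one_of_pos (x := (1 + ε / 2)⁻¹) (by positivity)
    rw [Real.log_inv] at h1
    have h2 : (1 + ε / 2)⁻¹ * (1 + ε / 2) = 1 := inv_mul_cancel₀ (ne_of_gt hpos)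
    nlinarith [h1, h2]
  have hdge : 4 * Real.log n / ε ≤ (d : ℝ) := Nat.le_ceil _
  have hlogn : Real.log n ≤ (d : ℝ) * Real.log (1 + ε / 2) := by
    have h1 : Real.log n ≤ (d : ℝ) * (ε / 4) := by
      rw [div_le_iff₀ hε0] at hdge
      nlinarith
    have h2 : (d : ℝ) * (ε / 4) ≤ (d : ℝ) * Real.log (1 + ε / 2) := by
      have : (0:ℝ) ≤ (d:ℝ) := Nat.cast_nonneg d
      nlinarith
    linarith
  have hpow : (n : ℝ) ≤ (1 + ε / 2) ^ d := by
    have h1 : (n : ℝ) = Real.exp (Real.log n) := (Real.exp_log (by linarith)).symm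
    have h2 : (1 + ε / 2) ^ d = Real.exp ((d : ℝ) * Real.log (1 + ε / 2)) := by
      rw [← Real.log_pow, Real.exp_log (by positivity)]
    rw [h1, h2]
    exact Real.exp_le_exp.2 hlogn
  -- contradiction
  have hfin : ((S (d + 1)).card : ℝ) ≤ (n : ℝ) := by
    exact_mod_cast Finset.card_le_univ (S (d + 1))
  have hlast := step d le_rfl
  have hgd := growth d le_rfl
  nlinarith [hlast, hgd, hpow, hfin, hε2, hnR]
end
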